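/- arXiv:1711.10208 — 4 statements merged into one kernel-verified Lean document; each statement's English description precedes it below -/
import Mathlib

section
/- Let G be a group, σ : G → G a group endomorphism, and define the Lang map L(g) = g⁻¹ · σ(g). Suppose L is surjective. Let X, X' ⊆ G be arbitrary subsets, and let S = {(x, x', y) ∈ X × X' × G : x · σ(y) = y · x'}. Then the map ι : L⁻¹(X) × L⁻¹(X') → S given by (g, g') ↦ (L(g), L(g'), g⁻¹g') is surjective. -/
/-- Surjectivity of the map `(g, g') ↦ (L(g), L(g'), g⁻¹g')` from
`L⁻¹(X) × L⁻¹(X')` onto `S = {(x, x', y) : x·σ(y) = y·x'}`, where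
`L(g) = g⁻¹·σ(g)` is the Lang map, assumed surjective. -/
theorem stmt0 {G : Type*} [Group G] (σ : G →* G)
    (hL : Function.Surjective (fun g : G => g⁻¹ * σ g))
    (X X' : Set G) :
    ∀ x x' y : G, x ∈ X → x' ∈ X' → x * σ y = y * x' →
      ∃ g g' : G, g⁻¹ * σ g ∈ X ∧ g'⁻¹ * σ g' ∈ X' ∧
        g⁻¹ * σ g = x ∧ g'⁻¹ * σ g' = x' ∧ g⁻¹ * g' = y := by
  intro x x' y hx hx' hxy
  obtain ⟨g, hg⟩ := hL x
  simp only at hg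
  have key : (g * y)⁻¹ * σ (g * y) = x' := by
    have : (g * y)⁻¹ * σ (g * y) = y⁻¹ * (g⁻¹ * σ g) * σ y := by
      simp only [map_mul]; group
    rw [this, hg, mul_assoc, hxy, inv_mul_cancel_left]
  exact ⟨g, g * y, hg ▸ hx, key ▸ hx', hg, key, by group⟩
end

section
/- Let O be a discrete valuation ring with uniformizer π, r ≥ 2, R = O/(π^r), and let i ∈ {0, …, r−2}. Fix y ∈ R lying in π^i R but not in π^(i+1) R. Then the map x ↦ 1 + x·y is a surjective group homomorphism from the additive group π^(r−i−1)R onto the multiplicative group 1 + π^(r−1)R. -/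
/-- For a DVR `O` with uniformizer `π`, `r ≥ 2`, `R = O/(π^r)`,
`0 ≤ i ≤ r−2`, and `y ∈ π^i R \ π^(i+1) R`, the map `x ↦ 1 + x·y` is a
surjective group homomorphism from the additive group `π^(r−i−1)R` onto the
multiplicative group `1 + π^(r−1)R`: its values are units, it sends sums to
products, and it is surjective. -/
theorem stmt9 {O : Type*} [CommRing O] [IsDomain O] [IsDiscreteValuationRing O]
    (π : O) (hπ : Irreducible π) (r i : ℕ) (hr : 2 ≤ r) (hi : i ≤ r - 2)
    (y : O ⧸ Ideal.span {π ^ r})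
    (hy : y ∈ Ideal.span {(Ideal.Quotient.mk (Ideal.span {π ^ r}) π) ^ i})
    (hy' : y ∉ Ideal.span {(Ideal.Quotient.mk (Ideal.span {π ^ r}) π) ^ (i + 1)}) :
    (∀ x ∈ Ideal.span {(Ideal.Quotient.mk (Ideal.span {π ^ r}) π) ^ (r - i - 1)},
        IsUnit (1 + x * y)) ∧
    (∀ x₁ ∈ Ideal.span {(Ideal.Quotient.mk (Ideal.span {π ^ r}) π) ^ (r - i - 1)},
      ∀ x₂ ∈ Ideal.span {(Ideal.Quotient.mk (Ideal.span {π ^ r}) π) ^ (r - i - 1)},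
        1 + (x₁ + x₂) * y = (1 + x₁ * y) * (1 + x₂ * y)) ∧
    (∀ u : O ⧸ Ideal.span {π ^ r},
        u - 1 ∈ Ideal.span {(Ideal.Quotient.mk (Ideal.span {π ^ r}) π) ^ (r - 1)} →
        ∃ x ∈ Ideal.span {(Ideal.Quotient.mk (Ideal.span {π ^ r}) π) ^ (r - i - 1)},
          u = 1 + x * y) := by
  set q := Ideal.Quotient.mk (Ideal.span {π ^ r}) with hq
  set P : O ⧸ Ideal.span {π ^ r} := q π with hP
  have hPzero : ∀ m : ℕ, r ≤ m → P ^ m = 0 := by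
    intro m hm
    have : P ^ m = P ^ r * P ^ (m - r) := by rw [← pow_add]; congr 1; omega
    rw [this, hP, ← map_pow]
    rw [Ideal.Quotient.eq_zero_iff_mem.mpr (Ideal.mem_span_singleton_self _)]
    ring
  obtain ⟨cy, hcy⟩ := Ideal.mem_span_singleton'.mp hy
  have key : ∀ x₁ ∈ Ideal.span {P ^ (r - i - 1)}, ∀ x₂ ∈ Ideal.span {P ^ (r - i - 1)},
      x₁ * x₂ * y ^ 2 = 0 := by
    intro x₁ h₁ x₂ h₂
    obtain ⟨c₁, hc₁⟩ := Ideal.mem_span_singleton'.mp h₁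
    obtain ⟨c₂, hc₂⟩ := Ideal.mem_span_singleton'.mp h₂
    have : x₁ * x₂ * y ^ 2 =
        (c₁ * c₂ * cy ^ 2) * P ^ ((r - i - 1) + ((r - i - 1) + (i + i))) := by
      rw [← hc₁, ← hc₂, ← hcy, pow_add, pow_add, pow_add]; ring
    rw [this, hPzero _ (by omega), mul_zero]
  refine ⟨?_, ?_, ?_⟩
  · intro x hx
    have h2 : (x * y) ^ 2 = 0 := by
      have := key x hx x hx
      linear_combination this
    exact (IsNilpotent.isUnit_one_add ⟨2, h2⟩)
  · intro x₁ h₁ x₂ h₂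
    have := key x₁ h₁ x₂ h₂
    linear_combination -this
  · intro u hu
    -- lift y
    obtain ⟨a, ha⟩ := Ideal.Quotient.mk_surjective y
    obtain ⟨c', hc'⟩ := Ideal.Quotient.mk_surjective cy
    have hmem : a ∈ Ideal.span {π ^ i} := by
      have : a - c' * π ^ i ∈ Ideal.span {π ^ r} := by
        rw [← Ideal.Quotient.eq_zero_iff_mem]
        simp only [map_sub, map_mul, map_pow, ha, hc', ← hP]
        rw [← hcy]; ring
      have hsub : Ideal.span ({π ^ r} : Set O) ≤ Ideal.span {π ^ i} := by
        rw [Ideal.span_singleton_le_span_singleton]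
        exact pow_dvd_pow π (by omega)
      have h1 : (a : O) = (a - c' * π ^ i) + c' * π ^ i := by ring
      rw [h1]
      exact Ideal.add_mem _ (hsub this)
        (Ideal.mem_span_singleton'.mpr ⟨c', rfl⟩)
    obtain ⟨b, hb⟩ := Ideal.mem_span_singleton'.mp hmem
    have hbu : IsUnit b := by
      by_contra hnb
      apply hy'
      have hbm : b ∈ Ideal.span {π} := by
        rw [← hπ.maximalIdeal_eq]
        exact hnb
      obtain ⟨d, hd⟩ := Ideal.mem_span_singleton'.mp hbm
      refine Ideal.mem_span_singleton'.mpr ⟨q d, ?_⟩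
      rw [← ha, ← hb, ← hd]
      rw [← map_pow, ← map_mul]
      congr 1
      ring
    set ub := hbu.unit with hub
    obtain ⟨c, hc⟩ := Ideal.mem_span_singleton'.mp hu
    refine ⟨c * q ((↑ub⁻¹ : Oˣ) : O) * P ^ (r - i - 1),
      Ideal.mem_span_singleton'.mpr ⟨c * q ((↑ub⁻¹ : Oˣ) : O), rfl⟩, ?_⟩
    have hy2 : y = P ^ i * q b := by
      rw [← ha, ← hb, map_mul, map_pow]; ring
    have hinv : q ((↑ub⁻¹ : Oˣ) : O) * q b = 1 := by
      rw [← map_mul]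
      have : ((↑ub⁻¹ : Oˣ) : O) * b = 1 := by
        rw [hub]
        simp [IsUnit.unit_spec]
      rw [this, map_one]
    have hpow : P ^ (r - i - 1) * P ^ i = P ^ (r - 1) := by
      rw [← pow_add]; congr 1; omega
    have : c * q ((↑ub⁻¹ : Oˣ) : O) * P ^ (r - i - 1) * y = u - 1 := by
      rw [hy2, ← hc]
      calc c * q ((↑ub⁻¹ : Oˣ) : O) * P ^ (r - i - 1) * (P ^ i * q b)
          = c * (P ^ (r - i - 1) * P ^ i) * (q ((↑ub⁻¹ : Oˣ) : O) * q b) := by ring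
        _ = c * P ^ (r - 1) := by rw [hpow, hinv, mul_one]
    rw [this]; ring
end

section
/- Let O be a discrete valuation ring with uniformizer π, r ≥ 1, R = O/(π^r), and fix b ∈ {0, 1, …, r}. In GLₙ(R), let U(m) denote the group of upper-triangular unipotent matrices congruent to 1 mod π^m, and let U⁻(m) denote the group of lower-triangular unipotent matrices congruent to 1 mod π^m. Then the product set U(r−b) · U⁻(b) is closed under taking inverses, i.e., if g ∈ U(r−b)·U⁻(b) then g⁻¹ ∈ U⁻(b)·U(r−b), and moreover U(r−b)·U⁻(b) = U⁻(b)·U(r−b); consequently U(r−b)·U⁻(b) is a subgroup of GLₙ(R). -/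
open Matrix

/-- Upper-triangular unipotent matrices in `GLₙ(R)` congruent to `1` modulo the
ideal generated by `p^m` (in the application, `p` is the image of the
uniformizer `π` in `R = O/(π^r)`). -/
def IsUpperUnipMod {R : Type*} [CommRing R] {n : ℕ} (p : R) (m : ℕ)
    (g : GL (Fin n) R) : Prop :=
  (∀ k, (g : Matrix (Fin n) (Fin n) R) k k = 1) ∧
  (∀ k l : Fin n, l < k → (g : Matrix (Fin n) (Fin n) R) k l = 0) ∧
  (∀ k l : Fin n, k < l → (g : Matrix (Fin n) (Fin n) R) k l ∈ Ideal.span {p ^ m})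

/-- Lower-triangular unipotent matrices in `GLₙ(R)` congruent to `1` modulo
`p^m`. -/
def IsLowerUnipMod {R : Type*} [CommRing R] {n : ℕ} (p : R) (m : ℕ)
    (g : GL (Fin n) R) : Prop :=
  (∀ k, (g : Matrix (Fin n) (Fin n) R) k k = 1) ∧
  (∀ k l : Fin n, k < l → (g : Matrix (Fin n) (Fin n) R) k l = 0) ∧
  (∀ k l : Fin n, l < k → (g : Matrix (Fin n) (Fin n) R) k l ∈ Ideal.span {p ^ m})

namespace Stmt16Aux

variable {R : Type*} [CommRing R] {n : ℕ}

/-- strictly upper triangular with entries in I -/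
def SU (I : Ideal R) (A : Matrix (Fin n) (Fin n) R) : Prop :=
  (∀ k l : Fin n, ¬ k < l → A k l = 0) ∧ ∀ k l : Fin n, A k l ∈ I

def SL (I : Ideal R) (A : Matrix (Fin n) (Fin n) R) : Prop :=
  (∀ k l : Fin n, ¬ l < k → A k l = 0) ∧ ∀ k l : Fin n, A k l ∈ I

variable {I J : Ideal R} {A B : Matrix (Fin n) (Fin n) R}

theorem SU.zero : SU I (0 : Matrix (Fin n) (Fin n) R) :=
  ⟨fun _ _ _ => rfl, fun _ _ => I.zero_mem⟩

theorem SU.add (hA : SU I A) (hB : SU I B) : SU I (A + B) :=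
  ⟨fun k l h => by simp [Matrix.add_apply, hA.1 k l h, hB.1 k l h],
   fun k l => I.add_mem (hA.2 k l) (hB.2 k l)⟩

theorem SU.mul (hA : SU I A) (hB : SU I B) : SU I (A * B) := by
  refine ⟨fun k l h => ?_, fun k l => ?_⟩
  · rw [Matrix.mul_apply]
    refine Finset.sum_eq_zero fun j _ => ?_
    by_cases hj : k < j
    · rw [hB.1 j l (fun hjl => h (hj.trans hjl)), mul_zero]
    · rw [hA.1 k j hj, zero_mul]
  · rw [Matrix.mul_apply]
    exact Ideal.sum_mem _ fun j _ => I.mul_mem_right _ (hA.2 k j)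

theorem SU.neg (hA : SU I A) : SU I (-A) :=
  ⟨fun k l h => by simp [hA.1 k l h], fun k l => I.neg_mem (hA.2 k l)⟩

theorem SU.sum {ι : Type*} (s : Finset ι) (f : ι → Matrix (Fin n) (Fin n) R)
    (h : ∀ i ∈ s, SU I (f i)) : SU I (∑ i ∈ s, f i) := by
  refine ⟨fun k l hkl => ?_, fun k l => ?_⟩
  · rw [Matrix.sum_apply]
    exact Finset.sum_eq_zero fun i hi => (h i hi).1 k l hkl
  · rw [Matrix.sum_apply]
    exact Ideal.sum_mem _ fun i hi => (h i hi).2 k l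

theorem SU.pow (hA : SU I A) {i : ℕ} (hi : 1 ≤ i) : SU I (A ^ i) := by
  induction i with
  | zero => omega
  | succ i ih =>
    rcases Nat.eq_or_lt_of_le hi with h | h
    · obtain rfl : i = 0 := by omega
      simpa using hA
    · rw [pow_succ]
      exact (ih (by omega)).mul hA

theorem SU.pow_entry_eq_zero (hA : SU I A) :
    ∀ (i : ℕ) (k l : Fin n), (l : ℕ) < (k : ℕ) + i → (A ^ i) k l = 0 := by
  intro i
  induction i with
  | zero =>
    intro k l h
    rw [pow_zero]
    exact Matrix.one_apply_ne (Fin.ne_of_val_ne (by omega))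
  | succ i ih =>
    intro k l h
    rw [pow_succ, Matrix.mul_apply]
    refine Finset.sum_eq_zero fun j _ => ?_
    by_cases hj : (j : ℕ) < (k : ℕ) + i
    · rw [ih k j hj, zero_mul]
    · rw [hA.1 j l (by simp only [Fin.lt_def]; omega), mul_zero]

theorem SU.pow_card (hA : SU I A) : A ^ n = 0 := by
  ext k l
  exact hA.pow_entry_eq_zero n k l (by omega)

/-- the inverse of 1 + strictly-upper-in-I is again of that form -/
theorem SU.inv (g : GL (Fin n) R)
    (hA : SU I ((g : Matrix (Fin n) (Fin n) R) - 1)) :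
    SU I (((g⁻¹ : GL (Fin n) R) : Matrix (Fin n) (Fin n) R) - 1) := by
  set A : Matrix (Fin n) (Fin n) R := (g : Matrix (Fin n) (Fin n) R) - 1 with hAdef
  set w : Matrix (Fin n) (Fin n) R := ∑ i ∈ Finset.range n, (-A) ^ i with hw
  have hnil : (-A) ^ n = 0 := by
    rw [neg_pow, hA.pow_card, mul_zero]
  have hg : (g : Matrix (Fin n) (Fin n) R) = 1 + A := by rw [hAdef]; abel
  have h1 : w * (g : Matrix (Fin n) (Fin n) R) = 1 := by
    have := geom_sum_mul (-A) n
    rw [hnil] at this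
    rw [hg]
    have h3 : w * (-A - 1) = -1 := by rw [hw]; simpa using this
    have h4 : w * (1 + A) = -(w * (-A - 1)) := by noncomm_ring
    rw [h4, h3, neg_neg]
  have h2 : (g : Matrix (Fin n) (Fin n) R) * w = 1 := by
    have := mul_geom_sum (-A) n
    rw [hnil] at this
    have h3 : (-A - 1) * w = -1 := by rw [hw]; simpa using this
    have h4 : (1 + A) * w = -((-A - 1) * w) := by noncomm_ring
    rw [hg, h4, h3, neg_neg]
  have hinv : ((g⁻¹ : GL (Fin n) R) : Matrix (Fin n) (Fin n) R) = w :=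
    Units.inv_eq_of_mul_eq_one_left h1
  rw [hinv]
  rcases Nat.eq_zero_or_pos n with hn | hn
  · exact ⟨fun k l => absurd k.2 (by omega), fun k l => absurd k.2 (by omega)⟩
  · obtain ⟨m, rfl⟩ : ∃ m, n = m + 1 := ⟨n - 1, by omega⟩
    have : w = (∑ i ∈ Finset.range m, (-A) ^ (i + 1)) + 1 := by
      rw [hw, Finset.sum_range_succ']; simp
    rw [this, add_sub_cancel_right]
    exact SU.sum _ _ fun i _ => (hA.neg).pow (by omega)

theorem SL.zero : SL I (0 : Matrix (Fin n) (Fin n) R) :=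
  ⟨fun _ _ _ => rfl, fun _ _ => I.zero_mem⟩

theorem SL.add (hA : SL I A) (hB : SL I B) : SL I (A + B) :=
  ⟨fun k l h => by simp [Matrix.add_apply, hA.1 k l h, hB.1 k l h],
   fun k l => I.add_mem (hA.2 k l) (hB.2 k l)⟩

theorem SL.mul (hA : SL I A) (hB : SL I B) : SL I (A * B) := by
  refine ⟨fun k l h => ?_, fun k l => ?_⟩
  · rw [Matrix.mul_apply]
    refine Finset.sum_eq_zero fun j _ => ?_
    by_cases hj : j < k
    · rw [hB.1 j l (fun hjl => h (hjl.trans hj)), mul_zero]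
    · rw [hA.1 k j hj, zero_mul]
  · rw [Matrix.mul_apply]
    exact Ideal.sum_mem _ fun j _ => I.mul_mem_right _ (hA.2 k j)

theorem SL.neg (hA : SL I A) : SL I (-A) :=
  ⟨fun k l h => by simp [hA.1 k l h], fun k l => I.neg_mem (hA.2 k l)⟩

theorem SL.sum {ι : Type*} (s : Finset ι) (f : ι → Matrix (Fin n) (Fin n) R)
    (h : ∀ i ∈ s, SL I (f i)) : SL I (∑ i ∈ s, f i) := by
  refine ⟨fun k l hkl => ?_, fun k l => ?_⟩
  · rw [Matrix.sum_apply]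
    exact Finset.sum_eq_zero fun i hi => (h i hi).1 k l hkl
  · rw [Matrix.sum_apply]
    exact Ideal.sum_mem _ fun i hi => (h i hi).2 k l

theorem SL.pow (hA : SL I A) {i : ℕ} (hi : 1 ≤ i) : SL I (A ^ i) := by
  induction i with
  | zero => omega
  | succ i ih =>
    rcases Nat.eq_or_lt_of_le hi with h | h
    · obtain rfl : i = 0 := by omega
      simpa using hA
    · rw [pow_succ]
      exact (ih (by omega)).mul hA

theorem SL.pow_entry_eq_zero (hA : SL I A) :
    ∀ (i : ℕ) (k l : Fin n), (k : ℕ) < (l : ℕ) + i → (A ^ i) k l = 0 := by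
  intro i
  induction i with
  | zero =>
    intro k l h
    rw [pow_zero]
    exact Matrix.one_apply_ne (Fin.ne_of_val_ne (by omega))
  | succ i ih =>
    intro k l h
    rw [pow_succ, Matrix.mul_apply]
    refine Finset.sum_eq_zero fun j _ => ?_
    by_cases hj : (k : ℕ) < (j : ℕ) + i
    · rw [ih k j hj, zero_mul]
    · rw [hA.1 j l (by simp only [Fin.lt_def]; omega), mul_zero]

theorem SL.pow_card (hA : SL I A) : A ^ n = 0 := by
  ext k l
  exact hA.pow_entry_eq_zero n k l (by omega)

theorem SL.inv (g : GL (Fin n) R)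
    (hA : SL I ((g : Matrix (Fin n) (Fin n) R) - 1)) :
    SL I (((g⁻¹ : GL (Fin n) R) : Matrix (Fin n) (Fin n) R) - 1) := by
  set A : Matrix (Fin n) (Fin n) R := (g : Matrix (Fin n) (Fin n) R) - 1 with hAdef
  set w : Matrix (Fin n) (Fin n) R := ∑ i ∈ Finset.range n, (-A) ^ i with hw
  have hnil : (-A) ^ n = 0 := by
    rw [neg_pow, hA.pow_card, mul_zero]
  have hg : (g : Matrix (Fin n) (Fin n) R) = 1 + A := by rw [hAdef]; abel
  have h1 : w * (g : Matrix (Fin n) (Fin n) R) = 1 := by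
    have := geom_sum_mul (-A) n
    rw [hnil] at this
    rw [hg]
    have h3 : w * (-A - 1) = -1 := by rw [hw]; simpa using this
    have h4 : w * (1 + A) = -(w * (-A - 1)) := by noncomm_ring
    rw [h4, h3, neg_neg]
  have hinv : ((g⁻¹ : GL (Fin n) R) : Matrix (Fin n) (Fin n) R) = w :=
    Units.inv_eq_of_mul_eq_one_left h1
  rw [hinv]
  rcases Nat.eq_zero_or_pos n with hn | hn
  · exact ⟨fun k l => absurd k.2 (by omega), fun k l => absurd k.2 (by omega)⟩
  · obtain ⟨m, rfl⟩ : ∃ m, n = m + 1 := ⟨n - 1, by omega⟩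
    have : w = (∑ i ∈ Finset.range m, (-A) ^ (i + 1)) + 1 := by
      rw [hw, Finset.sum_range_succ']; simp
    rw [this, add_sub_cancel_right]
    exact SL.sum _ _ fun i _ => (hA.neg).pow (by omega)

/-- glue: the statement's predicates in terms of `SU`/`SL` -/
theorem upper_iff (p : R) (m : ℕ) (g : GL (Fin n) R) :
    IsUpperUnipMod p m g ↔ SU (Ideal.span {p ^ m}) ((g : Matrix (Fin n) (Fin n) R) - 1) := by
  constructor
  · rintro ⟨h1, h2, h3⟩
    refine ⟨fun k l h => ?_, fun k l => ?_⟩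
    · rcases eq_or_ne k l with rfl | hkl
      · simp [Matrix.sub_apply, h1 k]
      · have hlk : l < k := lt_of_le_of_ne (not_lt.mp h) hkl.symm
        simp [Matrix.sub_apply, h2 k l hlk, Matrix.one_apply_ne hkl]
    · rcases lt_trichotomy k l with h | rfl | h
      · simpa [Matrix.sub_apply, Matrix.one_apply_ne (Fin.ne_of_lt h)] using h3 k l h
      · simp [Matrix.sub_apply, h1 k]
      · simp [Matrix.sub_apply, h2 k l h, Matrix.one_apply_ne (Fin.ne_of_lt h).symm]
  · rintro ⟨h1, h2⟩
    refine ⟨fun k => ?_, fun k l h => ?_, fun k l h => ?_⟩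
    · have := h1 k k (lt_irrefl k)
      simpa [Matrix.sub_apply, sub_eq_zero] using this
    · have := h1 k l (by exact fun hc => absurd (h.trans hc) (lt_irrefl _))
      simpa [Matrix.sub_apply, Matrix.one_apply_ne (Fin.ne_of_lt h).symm, sub_eq_zero] using this
    · have := h2 k l
      simpa [Matrix.sub_apply, Matrix.one_apply_ne (Fin.ne_of_lt h)] using this

theorem lower_iff (p : R) (m : ℕ) (g : GL (Fin n) R) :
    IsLowerUnipMod p m g ↔ SL (Ideal.span {p ^ m}) ((g : Matrix (Fin n) (Fin n) R) - 1) := by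
  constructor
  · rintro ⟨h1, h2, h3⟩
    refine ⟨fun k l h => ?_, fun k l => ?_⟩
    · rcases eq_or_ne k l with rfl | hkl
      · simp [Matrix.sub_apply, h1 k]
      · have hlk : k < l := lt_of_le_of_ne (not_lt.mp h) hkl
        simp [Matrix.sub_apply, h2 k l hlk, Matrix.one_apply_ne hkl]
    · rcases lt_trichotomy k l with h | rfl | h
      · simp [Matrix.sub_apply, h2 k l h, Matrix.one_apply_ne (Fin.ne_of_lt h)]
      · simp [Matrix.sub_apply, h1 k]
      · simpa [Matrix.sub_apply, Matrix.one_apply_ne (Fin.ne_of_lt h).symm] using h3 k l h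
  · rintro ⟨h1, h2⟩
    refine ⟨fun k => ?_, fun k l h => ?_, fun k l h => ?_⟩
    · have := h1 k k (lt_irrefl k)
      simpa [Matrix.sub_apply, sub_eq_zero] using this
    · have := h1 k l (by exact fun hc => absurd (h.trans hc) (lt_irrefl _))
      simpa [Matrix.sub_apply, Matrix.one_apply_ne (Fin.ne_of_lt h), sub_eq_zero] using this
    · have := h2 k l
      simpa [Matrix.sub_apply, Matrix.one_apply_ne (Fin.ne_of_lt h).symm] using this

theorem mul_eq_zero_of_entries {p : R} {a c : ℕ} (hz : p ^ a * p ^ c = 0)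
    {A B : Matrix (Fin n) (Fin n) R}
    (hA : ∀ k l, A k l ∈ Ideal.span {p ^ a}) (hB : ∀ k l, B k l ∈ Ideal.span {p ^ c}) :
    A * B = 0 := by
  ext k l
  rw [Matrix.mul_apply]
  refine Finset.sum_eq_zero fun j _ => ?_
  obtain ⟨x, hx⟩ := Ideal.mem_span_singleton'.mp (hA k j)
  obtain ⟨y, hy⟩ := Ideal.mem_span_singleton'.mp (hB j l)
  rw [← hx, ← hy]
  calc x * p ^ a * (y * p ^ c) = x * y * (p ^ a * p ^ c) := by ring
  _ = 0 := by rw [hz, mul_zero]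

/-- upper and lower pieces commute since `p^a · p^c = 0`. -/
theorem commute_of_zero {p : R} {a c : ℕ} (hz : p ^ a * p ^ c = 0)
    {u v : GL (Fin n) R} (hu : IsUpperUnipMod p a u) (hv : IsLowerUnipMod p c v) :
    u * v = v * u := by
  have hA := (upper_iff p a u).mp hu
  have hB := (lower_iff p c v).mp hv
  set A : Matrix (Fin n) (Fin n) R := (u : Matrix (Fin n) (Fin n) R) - 1 with hAd
  set B : Matrix (Fin n) (Fin n) R := (v : Matrix (Fin n) (Fin n) R) - 1 with hBd
  have hAB : A * B = 0 := mul_eq_zero_of_entries hz hA.2 hB.2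
  have hBA : B * A = 0 := by
    apply mul_eq_zero_of_entries (p := p) (a := c) (c := a) _ hB.2 hA.2
    rw [mul_comm]; exact hz
  ext1
  show (u : Matrix (Fin n) (Fin n) R) * v = (v : Matrix (Fin n) (Fin n) R) * u
  have hu' : (u : Matrix (Fin n) (Fin n) R) = 1 + A := by rw [hAd]; abel
  have hv' : (v : Matrix (Fin n) (Fin n) R) = 1 + B := by rw [hBd]; abel
  rw [hu', hv']
  have e1 : (1 + A) * (1 + B) = 1 + A + B + A * B := by noncomm_ring
  have e2 : (1 + B) * (1 + A) = 1 + A + B + B * A := by noncomm_ring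
  rw [e1, e2, hAB, hBA]

theorem upper_one (p : R) (m : ℕ) : IsUpperUnipMod p m (1 : GL (Fin n) R) := by
  rw [upper_iff]
  simpa using (SU.zero (I := Ideal.span {p ^ m}) (n := n))

theorem lower_one (p : R) (m : ℕ) : IsLowerUnipMod p m (1 : GL (Fin n) R) := by
  rw [lower_iff]
  simpa using (SL.zero (I := Ideal.span {p ^ m}) (n := n))

theorem upper_mul {p : R} {m : ℕ} {u u' : GL (Fin n) R}
    (hu : IsUpperUnipMod p m u) (hu' : IsUpperUnipMod p m u') :
    IsUpperUnipMod p m (u * u') := by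
  rw [upper_iff] at hu hu' ⊢
  have : ((u * u' : GL (Fin n) R) : Matrix (Fin n) (Fin n) R) - 1 =
      ((u : Matrix (Fin n) (Fin n) R) - 1) + ((u' : Matrix (Fin n) (Fin n) R) - 1) +
      ((u : Matrix (Fin n) (Fin n) R) - 1) * ((u' : Matrix (Fin n) (Fin n) R) - 1) := by
    show (u : Matrix (Fin n) (Fin n) R) * u' - 1 = _
    noncomm_ring
  rw [this]
  exact (hu.add hu').add (hu.mul hu')

theorem lower_mul {p : R} {m : ℕ} {u u' : GL (Fin n) R}
    (hu : IsLowerUnipMod p m u) (hu' : IsLowerUnipMod p m u') :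
    IsLowerUnipMod p m (u * u') := by
  rw [lower_iff] at hu hu' ⊢
  have : ((u * u' : GL (Fin n) R) : Matrix (Fin n) (Fin n) R) - 1 =
      ((u : Matrix (Fin n) (Fin n) R) - 1) + ((u' : Matrix (Fin n) (Fin n) R) - 1) +
      ((u : Matrix (Fin n) (Fin n) R) - 1) * ((u' : Matrix (Fin n) (Fin n) R) - 1) := by
    show (u : Matrix (Fin n) (Fin n) R) * u' - 1 = _
    noncomm_ring
  rw [this]
  exact (hu.add hu').add (hu.mul hu')

theorem upper_inv {p : R} {m : ℕ} {u : GL (Fin n) R} (hu : IsUpperUnipMod p m u) :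
    IsUpperUnipMod p m u⁻¹ := by
  rw [upper_iff] at hu ⊢
  exact SU.inv u hu

theorem lower_inv {p : R} {m : ℕ} {u : GL (Fin n) R} (hu : IsLowerUnipMod p m u) :
    IsLowerUnipMod p m u⁻¹ := by
  rw [lower_iff] at hu ⊢
  exact SL.inv u hu

theorem master {R : Type*} [CommRing R] {n : ℕ} (p : R) (a c : ℕ)
    (hz : p ^ a * p ^ c = 0) :
    (∀ g ∈ {g : GL (Fin n) R | ∃ u v, IsUpperUnipMod p a u ∧ IsLowerUnipMod p c v ∧ g = u * v},
      g⁻¹ ∈ {g : GL (Fin n) R | ∃ v u, IsLowerUnipMod p c v ∧ IsUpperUnipMod p a u ∧ g = v * u}) ∧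
    {g : GL (Fin n) R | ∃ u v, IsUpperUnipMod p a u ∧ IsLowerUnipMod p c v ∧ g = u * v} =
      {g : GL (Fin n) R | ∃ v u, IsLowerUnipMod p c v ∧ IsUpperUnipMod p a u ∧ g = v * u} ∧
    ∃ H : Subgroup (GL (Fin n) R), (H : Set (GL (Fin n) R)) =
      {g : GL (Fin n) R | ∃ u v, IsUpperUnipMod p a u ∧ IsLowerUnipMod p c v ∧ g = u * v} := by
  have hsets :
      {g : GL (Fin n) R | ∃ u v, IsUpperUnipMod p a u ∧ IsLowerUnipMod p c v ∧ g = u * v} =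
      {g : GL (Fin n) R | ∃ v u, IsLowerUnipMod p c v ∧ IsUpperUnipMod p a u ∧ g = v * u} := by
    ext g
    constructor
    · rintro ⟨u, v, hu, hv, rfl⟩
      exact ⟨v, u, hv, hu, commute_of_zero hz hu hv⟩
    · rintro ⟨v, u, hv, hu, rfl⟩
      exact ⟨u, v, hu, hv, (commute_of_zero hz hu hv).symm⟩
  have hinv : ∀ g ∈ {g : GL (Fin n) R |
        ∃ u v, IsUpperUnipMod p a u ∧ IsLowerUnipMod p c v ∧ g = u * v},
      g⁻¹ ∈ {g : GL (Fin n) R |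
        ∃ v u, IsLowerUnipMod p c v ∧ IsUpperUnipMod p a u ∧ g = v * u} := by
    rintro g ⟨u, v, hu, hv, rfl⟩
    exact ⟨v⁻¹, u⁻¹, lower_inv hv, upper_inv hu, by rw [_root_.mul_inv_rev]⟩
  refine ⟨hinv, hsets, ⟨{
    carrier := {g : GL (Fin n) R | ∃ u v, IsUpperUnipMod p a u ∧ IsLowerUnipMod p c v ∧ g = u * v}
    one_mem' := ⟨1, 1, upper_one p a, lower_one p c, by rw [mul_one]⟩
    mul_mem' := ?_
    inv_mem' := ?_ }, rfl⟩⟩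
  · rintro g h ⟨u, v, hu, hv, rfl⟩ ⟨u', v', hu', hv', rfl⟩
    refine ⟨u * u', v * v', upper_mul hu hu', lower_mul hv hv', ?_⟩
    have : v * u' = u' * v := (commute_of_zero hz hu' hv).symm
    rw [mul_assoc, ← mul_assoc v u' v', this, mul_assoc, ← mul_assoc, ← mul_assoc]
  · rintro g hg
    have := hinv g hg
    rw [← hsets] at this
    exact this

end Stmt16Aux

/-- In `GLₙ(O/π^r)`, the product set `U(r−b)·U⁻(b)` is closed under inverses
(with inverse lying in `U⁻(b)·U(r−b)`), equals `U⁻(b)·U(r−b)`, and is a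
subgroup. This is the group `U^{r−b,b}` underlying the Deligne–Lusztig
varieties at page `b`. -/
theorem stmt16 {O : Type*} [CommRing O] [IsDomain O] [IsDiscreteValuationRing O]
    (π : O) (hπ : Irreducible π) (r b n : ℕ) (hr : 1 ≤ r) (hb : b ≤ r) :
    letI R := O ⧸ Ideal.span {π ^ r}
    letI p : R := Ideal.Quotient.mk (Ideal.span {π ^ r}) π
    letI UL : Set (GL (Fin n) R) :=
      {g | ∃ u v, IsUpperUnipMod p (r - b) u ∧ IsLowerUnipMod p b v ∧ g = u * v}
    letI LU : Set (GL (Fin n) R) :=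
      {g | ∃ v u, IsLowerUnipMod p b v ∧ IsUpperUnipMod p (r - b) u ∧ g = v * u}
    (∀ g ∈ UL, g⁻¹ ∈ LU) ∧ UL = LU ∧
      ∃ H : Subgroup (GL (Fin n) R), (H : Set (GL (Fin n) R)) = UL := by
  have hz : (Ideal.Quotient.mk (Ideal.span {π ^ r}) π) ^ (r - b) *
      (Ideal.Quotient.mk (Ideal.span {π ^ r}) π) ^ b = 0 := by
    rw [← pow_add, Nat.sub_add_cancel hb, ← map_pow, Ideal.Quotient.eq_zero_iff_mem]
    exact Ideal.mem_span_singleton_self _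
  exact Stmt16Aux.master _ (r - b) b hz
end

section
/- Let G be a group, σ : G → G an endomorphism with surjective Lang map L(g) = g⁻¹σ(g), and suppose the fixed-point set Gᵟ = {g : σ(g) = g} is finite. Then for any finite subsets X, X' ⊆ G such that L⁻¹(X) and L⁻¹(X') are finite, the cardinality identity |L⁻¹(X)| · |L⁻¹(X')| = |Gᵟ| · |{(x, x', y) ∈ X × X' × G : x·σ(y) = y·x'}| holds. -/
/-- Counting consequence of the Lang-map bijection:
`|L⁻¹(X)|·|L⁻¹(X')| = |Gᵟ|·|{(x, x', y) : x·σ(y) = y·x'}|`. -/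
theorem stmt18 {G : Type*} [Group G] (σ : G →* G)
    (hL : Function.Surjective (fun g : G => g⁻¹ * σ g))
    (hfix : Set.Finite {g : G | σ g = g})
    (X X' : Set G) (hX : X.Finite) (hX' : X'.Finite)
    (h1 : Set.Finite {g : G | g⁻¹ * σ g ∈ X})
    (h2 : Set.Finite {g : G | g⁻¹ * σ g ∈ X'}) :
    Nat.card {g : G | g⁻¹ * σ g ∈ X} * Nat.card {g : G | g⁻¹ * σ g ∈ X'}
      = Nat.card {g : G | σ g = g} *
        Nat.card {p : G × G × G |
          p.1 ∈ X ∧ p.2.1 ∈ X' ∧ p.1 * σ p.2.2 = p.2.2 * p.2.1} := by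
  classical
  set S : Set (G × G × G) :=
    {p : G × G × G | p.1 ∈ X ∧ p.2.1 ∈ X' ∧ p.1 * σ p.2.2 = p.2.2 * p.2.1} with hS
  have sec : ∀ p : S, ∃ a : G, a⁻¹ * σ a = (p : G × G × G).1 := fun p => hL _
  choose c hc using sec
  have hcc : ∀ (q : S), (q : G × G × G) = ((·) : S → G × G × G) q → True := fun _ _ => trivial
  have e : ({g : G | σ g = g} × S) ≃
      ({g : G | g⁻¹ * σ g ∈ X} × {g : G | g⁻¹ * σ g ∈ X'}) := by
    refine
      { toFun := fun gp => (⟨gp.1.1 * c gp.2, ?_⟩,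
          ⟨gp.1.1 * c gp.2 * (gp.2 : G × G × G).2.2, ?_⟩)
        invFun := fun ab =>
          (⟨(ab.1 : G) * (c ⟨((ab.1:G)⁻¹ * σ ab.1, (ab.2:G)⁻¹ * σ ab.2,
              (ab.1:G)⁻¹ * ab.2), ?_⟩)⁻¹, ?_⟩,
            ⟨((ab.1:G)⁻¹ * σ ab.1, (ab.2:G)⁻¹ * σ ab.2, (ab.1:G)⁻¹ * ab.2), ?_⟩)
        left_inv := ?_
        right_inv := ?_ }
    · obtain ⟨⟨g, hg⟩, p⟩ := gp
      have hg' : σ g = g := hg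
      have key : (g * c p)⁻¹ * σ (g * c p) = (p : G × G × G).1 := by
        rw [map_mul, hg']
        have e0 : (g * c p)⁻¹ * (g * σ (c p)) = (c p)⁻¹ * σ (c p) := by group
        rw [e0, hc p]
      show (g * c p)⁻¹ * σ (g * c p) ∈ X
      rw [key]; exact p.2.1
    · obtain ⟨⟨g, hg⟩, p⟩ := gp
      have hg' : σ g = g := hg
      obtain ⟨hx, hx', heq⟩ := p.2
      set y := (p : G × G × G).2.2 with hy
      have key : (g * c p * y)⁻¹ * σ (g * c p * y) = (p : G × G × G).2.1 := by
        rw [map_mul, map_mul, hg']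
        have e0 : (g * c p * y)⁻¹ * (g * σ (c p) * σ y)
            = y⁻¹ * (((c p)⁻¹ * σ (c p)) * σ y) := by group
        rw [e0, hc p, heq]; group
      show (g * c p * y)⁻¹ * σ (g * c p * y) ∈ X'
      rw [key]; exact hx'
    · obtain ⟨⟨a, ha⟩, ⟨b, hb⟩⟩ := ab
      refine ⟨ha, hb, ?_⟩
      simp only [map_mul, map_inv]
      group
    · obtain ⟨⟨a, ha⟩, ⟨b, hb⟩⟩ := ab
      set p : S := ⟨(a⁻¹ * σ a, b⁻¹ * σ b, a⁻¹ * b), by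
        refine ⟨ha, hb, ?_⟩
        simp only [map_mul, map_inv]
        group⟩ with hp
      have hcp : (c p)⁻¹ * σ (c p) = a⁻¹ * σ a := hc p
      have hσc : σ (c p) = c p * (a⁻¹ * σ a) := by rw [← hcp]; group
      show σ (a * (c p)⁻¹) = a * (c p)⁻¹
      rw [map_mul, map_inv, hσc]
      group
    · obtain ⟨⟨a, ha⟩, ⟨b, hb⟩⟩ := ab
      refine ⟨ha, hb, ?_⟩
      simp only [map_mul, map_inv]
      group
    · rintro ⟨⟨g, hg⟩, p⟩
      have hg' : σ g = g := hg
      obtain ⟨hx, hx', heq⟩ := p.2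
      set y := (p : G × G × G).2.2 with hy
      have e1 : (g * c p)⁻¹ * σ (g * c p) = (p : G × G × G).1 := by
        rw [map_mul, hg']
        have e0 : (g * c p)⁻¹ * (g * σ (c p)) = (c p)⁻¹ * σ (c p) := by group
        rw [e0, hc p]
      have e2 : (g * c p * y)⁻¹ * σ (g * c p * y) = (p : G × G × G).2.1 := by
        rw [map_mul, map_mul, hg']
        have e0 : (g * c p * y)⁻¹ * (g * σ (c p) * σ y)
            = y⁻¹ * (((c p)⁻¹ * σ (c p)) * σ y) := by group
        rw [e0, hc p, heq]; group
      have e3 : (g * c p)⁻¹ * (g * c p * y) = y := by group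
      have htrip : ((g * c p)⁻¹ * σ (g * c p),
          (g * c p * y)⁻¹ * σ (g * c p * y),
          (g * c p)⁻¹ * (g * c p * y)) = (p : G × G × G) :=
        Prod.ext e1 (Prod.ext e2 e3)
      have hmem : ((g * c p)⁻¹ * σ (g * c p),
          (g * c p * y)⁻¹ * σ (g * c p * y),
          (g * c p)⁻¹ * (g * c p * y)) ∈ S := htrip ▸ p.2
      have hceq : c ⟨_, hmem⟩ = c p := congrArg c (Subtype.ext htrip)
      refine Prod.ext (Subtype.ext ?_) (Subtype.ext ?_)
      · show g * c p * (c ⟨_, hmem⟩)⁻¹ = g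
        rw [hceq]
        group
      · exact htrip
    · rintro ⟨⟨a, ha⟩, ⟨b, hb⟩⟩
      refine Prod.ext (Subtype.ext ?_) (Subtype.ext ?_)
      · show a * (c _)⁻¹ * c _ = a
        group
      · show a * (c _)⁻¹ * c _ * (a⁻¹ * b) = b
        group
  have := Nat.card_congr e
  rw [Nat.card_prod, Nat.card_prod] at this
  omega
end
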